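/- For the choice τ_h n·n = -v_h·n on each edge and τ_h n·t = -(v_h·t)(m_e) on each edge (m_e the midpoint), the pairing b_E(τ_h, v_h) = -∫_{∂E} τ_h n · v_h equals ∫_{∂E} |v_h·n|^2 + ∑_{e} |e| |(v_h·t)(m_e)|^2, where the sum is over the edges of E; in particular b_E(τ_h, v_h) ≥ 0 with equality iff v_h·n ≡ 0 on ∂E and v_h·t vanishes at every edge midpoint. -/
import Mathlib

open MeasureTheory

lemma int_aff16 (p q : ℝ) : ∫ t in (0:ℝ)..1, (p + q * t) = p + q / 2 := by
  have h2 : IntervalIntegrable (fun t : ℝ => q * t) volume 0 1 :=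
    (continuous_const.mul continuous_id).intervalIntegrable _ _
  rw [intervalIntegral.integral_add intervalIntegrable_const h2, intervalIntegral.integral_const,
    intervalIntegral.integral_const_mul, integral_id]
  norm_num [smul_eq_mul]
  ring

lemma int_sq16 (p q : ℝ) :
    ∫ t in (0:ℝ)..1, (p + q * t) ^ 2 = p ^ 2 + p * q + q ^ 2 / 3 := by
  rw [intervalIntegral.integral_congr
      (g := fun t => p ^ 2 + (2 * p * q) * t + q ^ 2 * t ^ 2)
      (fun t _ => by ring)]
  have h1 : IntervalIntegrable (fun t : ℝ => p ^ 2 + (2 * p * q) * t) volume 0 1 :=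
    (continuous_const.add (continuous_const.mul continuous_id)).intervalIntegrable _ _
  have h2 : IntervalIntegrable (fun t : ℝ => q ^ 2 * t ^ 2) volume 0 1 :=
    (continuous_const.mul (continuous_pow 2)).intervalIntegrable _ _
  have h3 : IntervalIntegrable (fun t : ℝ => (2 * p * q) * t) volume 0 1 :=
    (continuous_const.mul continuous_id).intervalIntegrable _ _
  rw [intervalIntegral.integral_add h1 h2,
    intervalIntegral.integral_add intervalIntegrable_const h3,
    intervalIntegral.integral_const, intervalIntegral.integral_const_mul, intervalIntegral.integral_const_mul, integral_id, integral_pow]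
  norm_num
  ring

/- STATEMENT 16 -/
theorem stmt_16 (N : ℕ) (L : Fin N → ℝ) (hL : ∀ i, 0 < L i)
    (vn vt : Fin N → ℝ → ℝ)
    (hvn : ∀ i, ∃ p q : ℝ, ∀ t, vn i t = p + q * t)
    (hvt : ∀ i, ∃ p q : ℝ, ∀ t, vt i t = p + q * t) :
    (-(∑ i, L i * ∫ t in (0:ℝ)..1,
          ((-(vn i t)) * vn i t + (-(vt i (1/2))) * vt i t))
        = (∑ i, L i * ∫ t in (0:ℝ)..1, (vn i t) ^ 2)
            + ∑ i, L i * (vt i (1/2)) ^ 2) ∧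
    (0 ≤ -(∑ i, L i * ∫ t in (0:ℝ)..1,
          ((-(vn i t)) * vn i t + (-(vt i (1/2))) * vt i t))) ∧
    ((-(∑ i, L i * ∫ t in (0:ℝ)..1,
          ((-(vn i t)) * vn i t + (-(vt i (1/2))) * vt i t)) = 0)
      ↔ ((∀ i, ∀ t ∈ Set.Icc (0:ℝ) 1, vn i t = 0) ∧ ∀ i, vt i (1/2) = 0)) := by
  -- per-edge key identity
  have key : ∀ i, (∫ t in (0:ℝ)..1,
      ((-(vn i t)) * vn i t + (-(vt i (1/2))) * vt i t))
      = -((∫ t in (0:ℝ)..1, (vn i t) ^ 2) + (vt i (1/2)) ^ 2) := by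
    intro i
    obtain ⟨p, q, hpq⟩ := hvn i
    obtain ⟨r, s, hrs⟩ := hvt i
    have hA : (∫ t in (0:ℝ)..1, (vn i t) ^ 2) = p ^ 2 + p * q + q ^ 2 / 3 := by
      rw [intervalIntegral.integral_congr (g := fun t => (p + q * t) ^ 2)
          (fun t _ => by rw [hpq])]
      exact int_sq16 p q
    have hcongr : (∫ t in (0:ℝ)..1,
        ((-(vn i t)) * vn i t + (-(vt i (1/2))) * vt i t))
        = ∫ t in (0:ℝ)..1,
          (-((p + q * t) ^ 2) + (-(r + s * (1/2))) * (r + s * t)) := by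
      apply intervalIntegral.integral_congr
      intro t _
      simp only [hpq, hrs]
      ring
    have h1 : IntervalIntegrable (fun t : ℝ => -((p + q * t) ^ 2)) volume 0 1 :=
      (((continuous_const.add (continuous_const.mul continuous_id)).pow 2).neg).intervalIntegrable _ _
    have h2 : IntervalIntegrable (fun t : ℝ => (-(r + s * (1/2))) * (r + s * t)) volume 0 1 :=
      (continuous_const.mul (continuous_const.add (continuous_const.mul continuous_id))).intervalIntegrable _ _
    rw [hcongr, intervalIntegral.integral_add h1 h2, intervalIntegral.integral_neg, int_sq16, intervalIntegral.integral_const_mul, int_aff16,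
      hA, hrs]
    ring
  -- rewrite the total sum
  have main : -(∑ i, L i * ∫ t in (0:ℝ)..1,
        ((-(vn i t)) * vn i t + (-(vt i (1/2))) * vt i t))
      = ∑ i, L i * ((∫ t in (0:ℝ)..1, (vn i t) ^ 2) + (vt i (1/2)) ^ 2) := by
    rw [← Finset.sum_neg_distrib]
    exact Finset.sum_congr rfl fun i _ => by rw [key i]; ring
  have hAnn : ∀ i, 0 ≤ ∫ t in (0:ℝ)..1, (vn i t) ^ 2 := fun i =>
    intervalIntegral.integral_nonneg (by norm_num) (fun u _ => sq_nonneg _)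
  have hterm : ∀ i ∈ Finset.univ (α := Fin N),
      0 ≤ L i * ((∫ t in (0:ℝ)..1, (vn i t) ^ 2) + (vt i (1/2)) ^ 2) := fun i _ =>
    mul_nonneg (hL i).le (add_nonneg (hAnn i) (sq_nonneg _))
  refine ⟨?_, ?_, ?_⟩
  · rw [main]
    simp_rw [mul_add]
    exact Finset.sum_add_distrib
  · rw [main]
    exact Finset.sum_nonneg hterm
  · rw [main, Finset.sum_eq_zero_iff_of_nonneg hterm]
    constructor
    · intro h
      have hz : ∀ i, (∫ t in (0:ℝ)..1, (vn i t) ^ 2) = 0 ∧ vt i (1/2) = 0 := by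
        intro i
        have h0 := h i (Finset.mem_univ i)
        have h1 : (∫ t in (0:ℝ)..1, (vn i t) ^ 2) + (vt i (1/2)) ^ 2 = 0 :=
          (mul_eq_zero.mp h0).resolve_left (hL i).ne'
        have h2 := hAnn i
        have h3 := sq_nonneg (vt i (1/2))
        constructor
        · linarith
        · have : (vt i (1/2)) ^ 2 = 0 := by linarith
          exact pow_eq_zero_iff (by norm_num) |>.mp this
      refine ⟨?_, fun i => (hz i).2⟩
      intro i t _
      obtain ⟨p, q, hpq⟩ := hvn i
      have hA : (∫ t in (0:ℝ)..1, (vn i t) ^ 2) = p ^ 2 + p * q + q ^ 2 / 3 := by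
        rw [intervalIntegral.integral_congr (g := fun t => (p + q * t) ^ 2)
            (fun t _ => by rw [hpq])]
        exact int_sq16 p q
      have h0 : p ^ 2 + p * q + q ^ 2 / 3 = 0 := by rw [← hA]; exact (hz i).1
      have hq : q = 0 := by nlinarith [sq_nonneg (2 * p + q), sq_nonneg q]
      have hp : p = 0 := by nlinarith [sq_nonneg p]
      rw [hpq, hp, hq]; ring
    · rintro ⟨h1, h2⟩ i _
      obtain ⟨p, q, hpq⟩ := hvn i
      have hp : p = 0 := by
        have := h1 i 0 (by norm_num)
        rw [hpq] at this; linarith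
      have hq : q = 0 := by
        have := h1 i 1 (by norm_num)
        rw [hpq, hp] at this; linarith
      have hA : (∫ t in (0:ℝ)..1, (vn i t) ^ 2) = 0 := by
        rw [intervalIntegral.integral_congr (g := fun t => (p + q * t) ^ 2)
            (fun t _ => by rw [hpq]), int_sq16, hp, hq]
        ring
      rw [hA, h2 i]
      ring
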